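/- The function k(x,y) = (⟨x,y⟩)·((π - arccos⟨x,y⟩)/(2π)) defined on the unit sphere of R^d is a positive semidefinite kernel: for any finite collection of unit vectors x₁,...,xₙ and reals c₁,...,cₙ, Σ_{i,j} c_i c_j k(x_i, x_j) ≥ 0. -/

import Mathlib

open Real Finset

noncomputable def cC (l : ℕ) : ℝ := (Nat.centralBinom l : ℝ) / 4 ^ l
noncomputable def aC (l : ℕ) : ℝ := cC l / (2 * l + 1)

lemma cC_pos (l : ℕ) : 0 < cC l :=
  div_pos (by exact_mod_cast Nat.centralBinom_pos l) (by positivity)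

lemma aC_pos (l : ℕ) : 0 < aC l := div_pos (cC_pos l) (by positivity)

lemma cC_zero : cC 0 = 1 := by simp [cC, Nat.centralBinom]

lemma cC_rec (l : ℕ) : (2 * l + 2) * cC (l + 1) = (2 * l + 1) * cC l := by
  have h' : ((l : ℝ) + 1) * (Nat.centralBinom (l + 1) : ℝ)
      = 2 * (2 * l + 1) * (Nat.centralBinom l : ℝ) := by
    exact_mod_cast congrArg (Nat.cast : ℕ → ℝ) (Nat.succ_mul_centralBinom_succ l)
  have h4 : (4 : ℝ) ^ (l + 1) = 4 * 4 ^ l := by ring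
  have h4p : (0:ℝ) < 4 ^ l := by positivity
  unfold cC
  rw [h4]
  field_simp
  nlinarith [h']

lemma cC_le_one (l : ℕ) : cC l ≤ 1 := by
  induction l with
  | zero => simp [cC_zero]
  | succ m ih =>
    have h := cC_rec m
    have h2 : cC (m + 1) = (2 * m + 1) / (2 * m + 2) * cC m := by
      field_simp
      linarith [h]
    rw [h2]
    have : (2 * (m:ℝ) + 1) / (2 * m + 2) ≤ 1 := by
      rw [div_le_one (by positivity)]; linarith
    nlinarith [cC_pos m, this, ih]

lemma aC_mul (l : ℕ) : aC l * (2 * l + 1) = cC l := by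
  unfold aC; field_simp


noncomputable def Fs (t : ℝ) : ℝ := ∑' l, aC l * t ^ (2 * l + 1)
noncomputable def Gs (t : ℝ) : ℝ := ∑' l, cC l * t ^ (2 * l)
noncomputable def Dg (t : ℝ) : ℝ := ∑' l, cC l * ((2 * l : ℕ) * t ^ (2 * l - 1))
lemma summable_two_mul_geom {ρ : ℝ} (h0 : 0 < ρ) (h1 : ρ < 1) :
    Summable (fun l : ℕ => 2 * (l : ℝ) * ρ ^ (2 * l - 1)) := by
  have hρ2 : ‖ρ ^ 2‖ < 1 := by
    rw [Real.norm_eq_abs, abs_of_nonneg (by positivity)]; nlinarith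
  have h2 : Summable (fun l : ℕ => (l : ℝ) ^ 1 * (ρ ^ 2) ^ l) :=
    summable_pow_mul_geometric_of_norm_lt_one 1 hρ2
  refine ((h2.mul_left (2 / ρ)).congr fun l => ?_)
  cases l with
  | zero => simp
  | succ m =>
    have e : 2 * (m + 1) - 1 = 2 * m + 1 := by omega
    rw [e]
    field_simp
    ring

lemma rho_facts {y : ℝ} (hy : |y| < 1) :
    0 < (|y| + 1) / 2 ∧ (|y| + 1) / 2 < 1 ∧ |y| < (|y| + 1) / 2 := by
  have := abs_nonneg y
  refine ⟨by linarith, by linarith, by linarith⟩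

lemma abs_pow_le {w ρ : ℝ} (hw : |w| ≤ ρ) (k : ℕ) : |w| ^ k ≤ ρ ^ k :=
  pow_le_pow_left₀ (abs_nonneg w) hw k

lemma summable_Gs {y : ℝ} (hy : |y| < 1) : Summable fun l => cC l * y ^ (2 * l) := by
  refine Summable.of_norm_bounded (g := fun l => (y ^ 2) ^ l)
    (summable_geometric_of_lt_one (by positivity) (by nlinarith [abs_nonneg y, sq_abs y])) ?_
  intro l
  have h1 : ‖cC l * y ^ (2 * l)‖ = cC l * (y ^ 2) ^ l := by
    rw [norm_mul, Real.norm_eq_abs, Real.norm_eq_abs, abs_of_pos (cC_pos l), abs_pow,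
      pow_mul, sq_abs]
  rw [h1]
  have h2 : (0:ℝ) ≤ (y ^ 2) ^ l := by positivity
  nlinarith [cC_le_one l, cC_pos l]

lemma summable_Dgterm {y : ℝ} (hy : |y| < 1) :
    Summable fun l => cC l * ((2 * l : ℕ) * y ^ (2 * l - 1)) := by
  obtain ⟨h0, h1, h2⟩ := rho_facts hy
  set ρ := (|y| + 1) / 2 with hρ
  refine Summable.of_norm_bounded (g := fun l => 2 * (l : ℝ) * ρ ^ (2 * l - 1))
    (summable_two_mul_geom h0 h1) ?_
  intro l
  have h3 : ‖cC l * ((2 * l : ℕ) * y ^ (2 * l - 1))‖ = cC l * (2 * l * |y| ^ (2 * l - 1)) := by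
    rw [norm_mul, norm_mul, Real.norm_eq_abs, abs_of_pos (cC_pos l), Real.norm_eq_abs,
      Real.norm_eq_abs, abs_pow]
    push_cast
    rw [abs_of_nonneg (by positivity : (0:ℝ) ≤ 2 * (l:ℝ))]
  rw [h3]
  have h4 : |y| ^ (2 * l - 1) ≤ ρ ^ (2 * l - 1) := abs_pow_le h2.le _
  show cC l * (2 * ↑l * |y| ^ (2 * l - 1)) ≤ 2 * ↑l * ρ ^ (2 * l - 1)
  calc cC l * (2 * ↑l * |y| ^ (2 * l - 1)) ≤ 1 * (2 * ↑l * ρ ^ (2 * l - 1)) := by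
        gcongr
        all_goals first | exact cC_le_one l | exact h4 | positivity
    _ = 2 * ↑l * ρ ^ (2 * l - 1) := one_mul _

lemma hasDerivAt_Gs {y : ℝ} (hy : |y| < 1) : HasDerivAt Gs (Dg y) y := by
  obtain ⟨h0, h1, h2⟩ := rho_facts hy
  set ρ := (|y| + 1) / 2 with hρ
  have key := hasDerivAt_tsum_of_isPreconnected
    (F := ℝ) (𝕜 := ℝ)
    (u := fun l : ℕ => 2 * (l : ℝ) * ρ ^ (2 * l - 1))
    (g := fun l w => cC l * w ^ (2 * l))
    (g' := fun l w => cC l * ((2 * l : ℕ) * w ^ (2 * l - 1)))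
    (t := Set.Ioo (-ρ) ρ) (y₀ := 0) (y := y)
    (summable_two_mul_geom h0 h1) isOpen_Ioo (convex_Ioo _ _).isPreconnected
    (fun l w _ => (hasDerivAt_pow (2 * l) w).const_mul (cC l))
    (fun l w hw => ?_) (by constructor <;> simp [h0] <;> linarith)
    ?_ (abs_lt.mp h2 |> fun h => ⟨h.1, h.2⟩)
  · exact key
  · have hw' : |w| ≤ ρ := by
      rw [abs_le]; exact ⟨hw.1.le, hw.2.le⟩
    have h3 : ‖cC l * ((2 * l : ℕ) * w ^ (2 * l - 1))‖ = cC l * (2 * l * |w| ^ (2 * l - 1)) := by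
      rw [norm_mul, norm_mul, Real.norm_eq_abs, abs_of_pos (cC_pos l), Real.norm_eq_abs,
        Real.norm_eq_abs, abs_pow]
      push_cast
      rw [abs_of_nonneg (by positivity : (0:ℝ) ≤ 2 * (l:ℝ))]
    rw [h3]
    have h4 : |w| ^ (2 * l - 1) ≤ ρ ^ (2 * l - 1) := abs_pow_le hw' _
    show cC l * (2 * ↑l * |w| ^ (2 * l - 1)) ≤ 2 * ↑l * ρ ^ (2 * l - 1)
    calc cC l * (2 * ↑l * |w| ^ (2 * l - 1)) ≤ 1 * (2 * ↑l * ρ ^ (2 * l - 1)) := by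
          gcongr
          all_goals first | exact cC_le_one l | exact h4 | positivity
      _ = 2 * ↑l * ρ ^ (2 * l - 1) := one_mul _
  · refine summable_of_ne_finset_zero (s := {0}) fun l hl => ?_
    have : 2 * l ≠ 0 := by simpa using hl
    simp [zero_pow this]

lemma aC_le_one (l : ℕ) : aC l ≤ 1 := by
  have := aC_mul l
  nlinarith [aC_pos l, cC_le_one l, (by positivity : (0:ℝ) < 2 * (l:ℝ) + 1)]

lemma summable_Fsterm {y : ℝ} (hy : |y| < 1) : Summable fun l => aC l * y ^ (2 * l + 1) := by
  have h := hy
  · refine Summable.of_norm_bounded (g := fun l => (y ^ 2) ^ l)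
      (summable_geometric_of_lt_one (by positivity) (by nlinarith [abs_nonneg y, sq_abs y])) ?_
    intro l
    have h1 : ‖aC l * y ^ (2 * l + 1)‖ = aC l * (|y| ^ (2 * l) * |y|) := by
      rw [norm_mul, Real.norm_eq_abs, Real.norm_eq_abs, abs_of_pos (aC_pos l), abs_pow, pow_succ]
    rw [h1]
    have h2 : aC l ≤ 1 := aC_le_one l
    have h3 : |y| ^ (2 * l) = (y ^ 2) ^ l := by rw [pow_mul, sq_abs]
    calc aC l * (|y| ^ (2 * l) * |y|) ≤ 1 * ((y ^ 2) ^ l * 1) := by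
          rw [← h3]
          gcongr
          all_goals first | exact h2 | exact hy.le | positivity
      _ = (y ^ 2) ^ l := by ring

lemma hasDerivAt_Fs {y : ℝ} (hy : |y| < 1) : HasDerivAt Fs (Gs y) y := by
  obtain ⟨h0, h1, h2⟩ := rho_facts hy
  set ρ := (|y| + 1) / 2 with hρ
  have key := hasDerivAt_tsum_of_isPreconnected
    (F := ℝ) (𝕜 := ℝ)
    (u := fun l : ℕ => (ρ ^ 2) ^ l)
    (g := fun l w => aC l * w ^ (2 * l + 1))
    (g' := fun l w => aC l * ((2 * l + 1 : ℕ) * w ^ (2 * l)))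
    (t := Set.Ioo (-ρ) ρ) (y₀ := 0) (y := y)
    (summable_geometric_of_lt_one (by positivity) (by nlinarith)) isOpen_Ioo
    (convex_Ioo _ _).isPreconnected
    (fun l w _ => (hasDerivAt_pow (2 * l + 1) w).const_mul (aC l))
    (fun l w hw => ?_) (by constructor <;> simp [h0] <;> linarith)
    (by
      refine summable_of_ne_finset_zero (s := ∅) fun l _ => ?_
      simp)
    (abs_lt.mp h2 |> fun h => ⟨h.1, h.2⟩)
  · have he : (fun l => aC l * ((2 * l + 1 : ℕ) * y ^ (2 * l))) = fun l => cC l * y ^ (2 * l) := by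
      funext l
      rw [← mul_assoc]
      push_cast
      rw [mul_comm (aC l) _, mul_comm ((2:ℝ) * l + 1) (aC l), aC_mul l]
    rw [he] at key
    exact key
  · have hw' : |w| ≤ ρ := by rw [abs_le]; exact ⟨hw.1.le, hw.2.le⟩
    have h3 : ‖aC l * ((2 * l + 1 : ℕ) * w ^ (2 * l))‖ = aC l * (2 * l + 1) * |w| ^ (2 * l) := by
      rw [norm_mul, norm_mul, Real.norm_eq_abs, abs_of_pos (aC_pos l), Real.norm_eq_abs,
        Real.norm_eq_abs, abs_pow]
      push_cast
      rw [abs_of_nonneg (by positivity : (0:ℝ) ≤ 2 * (l:ℝ) + 1)]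
      ring
    rw [h3, aC_mul l]
    show cC l * |w| ^ (2 * l) ≤ (ρ ^ 2) ^ l
    have h4 : |w| ^ (2 * l) ≤ ρ ^ (2 * l) := abs_pow_le hw' _
    calc cC l * |w| ^ (2 * l) ≤ 1 * ρ ^ (2 * l) := by
          gcongr
          all_goals first | exact cC_le_one l | positivity
      _ = (ρ ^ 2) ^ l := by rw [one_mul, ← pow_mul, mul_comm]

lemma ode {y : ℝ} (hy : |y| < 1) : (1 - y ^ 2) * Dg y = y * Gs y := by
  set f : ℕ → ℝ := fun l => cC l * ((2 * l : ℕ) * y ^ (2 * l - 1)) with hfdef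
  have hf : Summable f := summable_Dgterm hy
  have hD : HasSum f (Dg y) := hf.hasSum
  have hG : HasSum (fun l => cC l * y ^ (2 * l)) (Gs y) := (summable_Gs hy).hasSum
  have h2 : HasSum (fun l => cC l * y ^ (2 * l + 1)) (y * Gs y) := by
    have hfun : (fun l => cC l * y ^ (2 * l + 1)) = fun l => y * (cC l * y ^ (2 * l)) := by
      funext l; ring
    rw [hfun]; exact hG.mul_left y
  have h3 : HasSum (fun l : ℕ => cC l * (2 * (l:ℝ)) * y ^ (2 * l + 1)) (y ^ 2 * Dg y) := by
    have hfun : (fun l : ℕ => cC l * (2 * (l:ℝ)) * y ^ (2 * l + 1)) = fun l : ℕ => y ^ 2 * f l := by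
      funext l
      cases l with
      | zero => simp [hfdef]
      | succ m =>
        have e : 2 * (m + 1) - 1 = 2 * m + 1 := by omega
        simp only [hfdef, e]
        push_cast
        ring
    rw [hfun]; exact hD.mul_left (y ^ 2)
  have h1 : HasSum (fun l : ℕ => (2 * (l:ℝ) + 1) * cC l * y ^ (2 * l + 1)) (Dg y) := by
    have hf0 : f 0 = 0 := by simp [hfdef]
    have hD' : HasSum f (Dg y + ∑ i ∈ Finset.range 1, f i) := by simpa [hf0] using hD
    have hshift : HasSum (fun l => f (l + 1)) (Dg y) := (hasSum_nat_add_iff 1).mpr hD'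
    have hfun : (fun l => f (l + 1)) = fun l : ℕ => (2 * (l:ℝ) + 1) * cC l * y ^ (2 * l + 1) := by
      funext l
      have e : 2 * (l + 1) - 1 = 2 * l + 1 := by omega
      have e2 := cC_rec l
      simp only [hfdef, e]
      push_cast
      linear_combination y ^ (2 * l + 1) * e2
    rwa [hfun] at hshift
  have hsum := h3.add h2
  have hfun : (fun l : ℕ => cC l * (2 * (l:ℝ)) * y ^ (2 * l + 1) + cC l * y ^ (2 * l + 1))
      = fun l : ℕ => (2 * (l:ℝ) + 1) * cC l * y ^ (2 * l + 1) := by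
    funext l; ring
  rw [hfun] at hsum
  have huniq := h1.unique hsum
  linear_combination huniq

lemma const_on_Ioo {f : ℝ → ℝ} (hf : ∀ z ∈ Set.Ioo (-1:ℝ) 1, HasDerivAt f 0 z) {y : ℝ}
    (hy : y ∈ Set.Ioo (-1:ℝ) 1) : f y = f 0 := by
  refine (convex_Ioo (-1:ℝ) 1).is_const_of_fderivWithin_eq_zero (𝕜 := ℝ)
    (fun z hz => ((hf z hz).differentiableAt).differentiableWithinAt)
    (fun z hz => ?_) hy (by constructor <;> norm_num)
  rw [fderivWithin_of_isOpen isOpen_Ioo hz, (hf z hz).hasFDerivAt.fderiv]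
  ext w
  simp

lemma Gs_zero : Gs 0 = 1 := by
  unfold Gs
  rw [tsum_eq_single 0 (fun l hl => by
    have : 2 * l ≠ 0 := by omega
    simp [zero_pow this])]
  simp [cC_zero]

lemma Fs_zero : Fs 0 = 0 := by
  unfold Fs
  have : (fun l : ℕ => aC l * (0:ℝ) ^ (2 * l + 1)) = fun _ => 0 := by
    funext l; simp
  rw [this, tsum_zero]

lemma Gs_eq {y : ℝ} (hy : |y| < 1) : Gs y = 1 / Real.sqrt (1 - y ^ 2) := by
  have hderiv : ∀ z ∈ Set.Ioo (-1:ℝ) 1, HasDerivAt (fun w => Gs w * Real.sqrt (1 - w ^ 2)) 0 z := by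
    intro z hz
    have hz1 : |z| < 1 := abs_lt.mpr ⟨hz.1, hz.2⟩
    have hs : (0:ℝ) < 1 - z ^ 2 := by nlinarith [hz.1, hz.2]
    have hsqpos : 0 < Real.sqrt (1 - z ^ 2) := Real.sqrt_pos.mpr hs
    have hG := hasDerivAt_Gs hz1
    have hinner : HasDerivAt (fun w : ℝ => 1 - w ^ 2) (-(2 * z)) z := by
      have := (hasDerivAt_pow 2 z).const_sub 1
      simpa using this
    have hsqrt : HasDerivAt (fun w : ℝ => Real.sqrt (1 - w ^ 2))
        (1 / (2 * Real.sqrt (1 - z ^ 2)) * (-(2 * z))) z := by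
      have := (Real.hasDerivAt_sqrt hs.ne').comp z hinner
      simpa [Function.comp_def] using this
    have hmul := hG.mul hsqrt
    have hval : Dg z * Real.sqrt (1 - z ^ 2)
        + Gs z * (1 / (2 * Real.sqrt (1 - z ^ 2)) * (-(2 * z))) = 0 := by
      have hode := ode hz1
      have hss : Real.sqrt (1 - z ^ 2) * Real.sqrt (1 - z ^ 2) = 1 - z ^ 2 :=
        Real.mul_self_sqrt hs.le
      field_simp
      linear_combination hode + Dg z * hss
    rw [hval] at hmul
    exact hmul
  have hy' : y ∈ Set.Ioo (-1:ℝ) 1 := by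
    constructor <;> [linarith [abs_lt.mp hy |>.1]; linarith [abs_lt.mp hy |>.2]]
  have hc := const_on_Ioo hderiv hy'
  have h0 : Gs 0 * Real.sqrt (1 - (0:ℝ) ^ 2) = 1 := by
    rw [Gs_zero]; norm_num
  have hs : (0:ℝ) < 1 - y ^ 2 := by nlinarith [abs_lt.mp hy |>.1, abs_lt.mp hy |>.2]
  have hsqpos : 0 < Real.sqrt (1 - y ^ 2) := Real.sqrt_pos.mpr hs
  have h2 : Gs y * Real.sqrt (1 - y ^ 2) = 1 := by rw [hc]; exact h0
  rw [eq_div_iff hsqpos.ne']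
  exact h2

lemma Fs_eq {y : ℝ} (hy : |y| < 1) : Fs y = Real.arcsin y := by
  have hderiv : ∀ z ∈ Set.Ioo (-1:ℝ) 1, HasDerivAt (fun w => Fs w - Real.arcsin w) 0 z := by
    intro z hz
    have hz1 : |z| < 1 := abs_lt.mpr ⟨hz.1, hz.2⟩
    have hF := hasDerivAt_Fs hz1
    have hA : HasDerivAt Real.arcsin (1 / Real.sqrt (1 - z ^ 2)) z :=
      Real.hasDerivAt_arcsin (ne_of_gt hz.1) (ne_of_lt hz.2)
    have := hF.sub hA
    rw [Gs_eq hz1, sub_self] at this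
    exact this
  have hy' : y ∈ Set.Ioo (-1:ℝ) 1 := by
    constructor <;> [linarith [abs_lt.mp hy |>.1]; linarith [abs_lt.mp hy |>.2]]
  have hc := const_on_Ioo hderiv hy'
  rw [Fs_zero, Real.arcsin_zero, sub_zero] at hc
  linarith [hc]

lemma partial_le_pi_div_two {L : ℕ} {s : ℝ} (h0 : 0 ≤ s) (h1 : s < 1) :
    ∑ l ∈ Finset.range L, aC l * s ^ (2 * l + 1) ≤ π / 2 := by
  have habs : |s| < 1 := by rwa [abs_of_nonneg h0]
  have hsum := summable_Fsterm habs
  have hle : ∑ l ∈ Finset.range L, aC l * s ^ (2 * l + 1) ≤ ∑' l, aC l * s ^ (2 * l + 1) :=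
    Summable.sum_le_tsum (Finset.range L) (fun l _ => mul_nonneg (aC_pos l).le (pow_nonneg h0 _)) hsum
  have : (∑' l, aC l * s ^ (2 * l + 1)) = Real.arcsin s := Fs_eq habs
  rw [this] at hle
  exact hle.trans (Real.arcsin_le_pi_div_two s)

lemma sum_range_aC_le (L : ℕ) : ∑ l ∈ Finset.range L, aC l ≤ π / 2 := by
  have cont : Continuous fun s : ℝ => ∑ l ∈ Finset.range L, aC l * s ^ (2 * l + 1) := by
    apply continuous_finset_sum
    intro l _
    exact continuous_const.mul (continuous_pow _)
  have tends : Filter.Tendsto (fun s : ℝ => ∑ l ∈ Finset.range L, aC l * s ^ (2 * l + 1))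
      (nhdsWithin 1 (Set.Iio 1)) (nhds (∑ l ∈ Finset.range L, aC l)) := by
    have h1 : Filter.Tendsto (fun s : ℝ => ∑ l ∈ Finset.range L, aC l * s ^ (2 * l + 1))
        (nhdsWithin 1 (Set.Iio 1)) (nhds (∑ l ∈ Finset.range L, aC l * 1 ^ (2 * l + 1))) :=
      (cont.tendsto 1).mono_left nhdsWithin_le_nhds
    simpa using h1
  refine le_of_tendsto tends ?_
  filter_upwards [Ioo_mem_nhdsLT_of_mem (by norm_num : (1:ℝ) ∈ Set.Ioc 0 1)] with s hs
  exact partial_le_pi_div_two hs.1.le hs.2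

lemma summable_aC : Summable aC :=
  summable_of_sum_range_le (fun n => (aC_pos n).le) sum_range_aC_le

lemma summable_Fsterm' {y : ℝ} (hy : |y| ≤ 1) : Summable fun l => aC l * y ^ (2 * l + 1) := by
  rcases lt_or_eq_of_le hy with h | h
  · exact summable_Fsterm h
  · refine Summable.of_norm_bounded (g := aC) summable_aC fun l => ?_
    rw [norm_mul, Real.norm_eq_abs, Real.norm_eq_abs, abs_of_pos (aC_pos l), abs_pow, h,
      one_pow, mul_one]

lemma tsum_aC : ∑' l, aC l = π / 2 := by
  refine le_antisymm (Real.tsum_le_of_sum_range_le (fun n => (aC_pos n).le) sum_range_aC_le) ?_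
  have tends : Filter.Tendsto Real.arcsin (nhdsWithin 1 (Set.Iio 1)) (nhds (π / 2)) := by
    have h1 : Filter.Tendsto Real.arcsin (nhdsWithin 1 (Set.Iio 1))
        (nhds (Real.arcsin 1)) := (Real.continuous_arcsin.tendsto 1).mono_left nhdsWithin_le_nhds
    rwa [Real.arcsin_one] at h1
  refine le_of_tendsto tends ?_
  filter_upwards [Ioo_mem_nhdsLT_of_mem (by norm_num : (1:ℝ) ∈ Set.Ioc 0 1)] with s hs
  have habs : |s| < 1 := by rw [abs_of_nonneg hs.1.le]; exact hs.2
  rw [← Fs_eq habs]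
  refine Summable.tsum_le_tsum (fun l => ?_) (summable_Fsterm habs) summable_aC
  have : s ^ (2 * l + 1) ≤ 1 := pow_le_one₀ hs.1.le hs.2.le
  nlinarith [aC_pos l]

lemma arcsin_hasSum {t : ℝ} (h : |t| ≤ 1) :
    HasSum (fun l => aC l * t ^ (2 * l + 1)) (Real.arcsin t) := by
  rcases lt_or_eq_of_le h with hlt | heq
  · have h1 := (summable_Fsterm hlt).hasSum
    have h2 : (∑' l, aC l * t ^ (2 * l + 1)) = Real.arcsin t := Fs_eq hlt
    rwa [h2] at h1
  · have hS : HasSum aC (π / 2) := by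
      have := summable_aC.hasSum
      rwa [tsum_aC] at this
    rcases (abs_eq (by norm_num : (0:ℝ) ≤ 1)).mp heq with h1 | h1
    · subst h1
      simpa [Real.arcsin_one] using hS
    · subst h1
      have hodd : ∀ l : ℕ, ((-1:ℝ)) ^ (2 * l + 1) = -1 := fun l =>
        Odd.neg_one_pow ⟨l, by ring⟩
      have hneg := hS.neg
      rw [Real.arcsin_neg, Real.arcsin_one]
      have hfun : (fun l : ℕ => aC l * (-1:ℝ) ^ (2 * l + 1)) = fun l => -aC l := by
        funext l; rw [hodd l]; ring
      rw [hfun]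
      exact hneg

lemma power_sum_nonneg {d n : ℕ} (x : Fin n → EuclideanSpace ℝ (Fin d)) (c : Fin n → ℝ)
    (m : ℕ) :
    0 ≤ ∑ i : Fin n, ∑ j : Fin n, c i * c j * (inner ℝ (x i) (x j) : ℝ) ^ m := by
  have hinner : ∀ i j, (inner ℝ (x i) (x j) : ℝ) = ∑ a : Fin d, x i a * x j a := by
    intro i j
    simp [PiLp.inner_apply, RCLike.inner_apply, conj_trivial]
    exact Finset.sum_congr rfl fun _ _ => mul_comm _ _
  set A : Fin n → (Fin m → Fin d) → ℝ := fun i p => c i * ∏ k, x i (p k) with hA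
  have key : ∀ i j, c i * c j * (inner ℝ (x i) (x j) : ℝ) ^ m
      = ∑ p : Fin m → Fin d, A i p * A j p := by
    intro i j
    rw [hinner i j, Fintype.sum_pow, Finset.mul_sum]
    refine Finset.sum_congr rfl fun p _ => ?_
    rw [hA]
    simp only
    rw [Finset.prod_mul_distrib]
    ring
  simp_rw [key]
  have swap : ∑ i : Fin n, ∑ j : Fin n, ∑ p : Fin m → Fin d, A i p * A j p
      = ∑ p : Fin m → Fin d, ∑ i : Fin n, ∑ j : Fin n, A i p * A j p :=
    (Finset.sum_congr rfl fun i _ => Finset.sum_comm).trans Finset.sum_comm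
  rw [swap]
  refine Finset.sum_nonneg fun p _ => ?_
  have : ∑ i : Fin n, ∑ j : Fin n, A i p * A j p = (∑ i : Fin n, A i p) ^ 2 := by
    rw [sq, Finset.sum_mul_sum]
  rw [this]
  exact sq_nonneg _

/-- The kernel `k(x,y) = ⟪x,y⟫ · (π - arccos⟪x,y⟫)/(2π)` on the unit sphere of
`ℝ^d` is positive semidefinite: for unit vectors `x₁,…,xₙ` and reals `c₁,…,cₙ`,
`∑_{i,j} cᵢ cⱼ k(xᵢ,xⱼ) ≥ 0`. -/
theorem arccos_kernel_posSemidef {d n : ℕ} (x : Fin n → EuclideanSpace ℝ (Fin d))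
    (hx : ∀ i, ‖x i‖ = 1) (c : Fin n → ℝ) :
    0 ≤ ∑ i : Fin n, ∑ j : Fin n,
        c i * c j *
          ((inner ℝ (x i) (x j) : ℝ) * ((π - Real.arccos (inner ℝ (x i) (x j) : ℝ)) / (2 * π))) := by
  have hpi : (0:ℝ) < π := Real.pi_pos
  set t : Fin n → Fin n → ℝ := fun i j => (inner ℝ (x i) (x j) : ℝ) with hT
  have ht : ∀ i j, |t i j| ≤ 1 := by
    intro i j
    have h := abs_real_inner_le_norm (x i) (x j)
    rw [hx i, hx j, one_mul] at h
    exact h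
  have hk : ∀ i j, c i * c j * (t i j * ((π - Real.arccos (t i j)) / (2 * π)))
      = c i * c j * t i j / 4 + c i * c j * (t i j * Real.arcsin (t i j)) / (2 * π) := by
    intro i j
    rw [Real.arccos]
    field_simp
    ring
  simp +zetaDelta only [hk, Finset.sum_add_distrib]
  have e1 : ∑ i : Fin n, ∑ j : Fin n, c i * c j * t i j / 4
      = (∑ i : Fin n, ∑ j : Fin n, c i * c j * t i j) / 4 := by
    rw [Finset.sum_div]
    exact Finset.sum_congr rfl fun i _ => by rw [Finset.sum_div]
  have e2 : ∑ i : Fin n, ∑ j : Fin n, c i * c j * (t i j * Real.arcsin (t i j)) / (2 * π)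
      = (∑ i : Fin n, ∑ j : Fin n, c i * c j * (t i j * Real.arcsin (t i j))) / (2 * π) := by
    rw [Finset.sum_div]
    exact Finset.sum_congr rfl fun i _ => by rw [Finset.sum_div]
  rw [e1, e2]
  have hQ1 : 0 ≤ ∑ i : Fin n, ∑ j : Fin n, c i * c j * t i j := by
    have h := power_sum_nonneg x c 1
    simpa only [pow_one] using h
  have hQ2 : 0 ≤ ∑ i : Fin n, ∑ j : Fin n, c i * c j * (t i j * Real.arcsin (t i j)) := by
    have hs : ∀ p : Fin n × Fin n, HasSum (fun l => c p.1 * c p.2 * (aC l * t p.1 p.2 ^ (2 * l + 2)))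
        (c p.1 * c p.2 * (t p.1 p.2 * Real.arcsin (t p.1 p.2))) := by
      intro p
      have h1 := ((arcsin_hasSum (ht p.1 p.2)).mul_left (t p.1 p.2)).mul_left (c p.1 * c p.2)
      have hfun : (fun l => c p.1 * c p.2 * (t p.1 p.2 * (aC l * t p.1 p.2 ^ (2 * l + 1))))
          = fun l => c p.1 * c p.2 * (aC l * t p.1 p.2 ^ (2 * l + 2)) := by
        funext l; ring
      rwa [hfun] at h1
    have hprod : ∑ i : Fin n, ∑ j : Fin n, c i * c j * (t i j * Real.arcsin (t i j))
        = ∑ p : Fin n × Fin n, c p.1 * c p.2 * (t p.1 p.2 * Real.arcsin (t p.1 p.2)) :=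
      (Fintype.sum_prod_type (f := fun p : Fin n × Fin n => c p.1 * c p.2 * (t p.1 p.2 * Real.arcsin (t p.1 p.2)))).symm
    rw [hprod]
    have hswap : ∑ p : Fin n × Fin n, c p.1 * c p.2 * (t p.1 p.2 * Real.arcsin (t p.1 p.2))
        = ∑' l, ∑ p : Fin n × Fin n, c p.1 * c p.2 * (aC l * t p.1 p.2 ^ (2 * l + 2)) := by
      calc ∑ p : Fin n × Fin n, c p.1 * c p.2 * (t p.1 p.2 * Real.arcsin (t p.1 p.2))
          = ∑ p : Fin n × Fin n, ∑' l, c p.1 * c p.2 * (aC l * t p.1 p.2 ^ (2 * l + 2)) :=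
            Finset.sum_congr rfl fun p _ => ((hs p).tsum_eq).symm
        _ = ∑' l, ∑ p : Fin n × Fin n, c p.1 * c p.2 * (aC l * t p.1 p.2 ^ (2 * l + 2)) :=
            (Summable.tsum_finsetSum fun p _ => (hs p).summable).symm
    rw [hswap]
    refine tsum_nonneg fun l => ?_
    have e3 : ∑ p : Fin n × Fin n, c p.1 * c p.2 * (aC l * t p.1 p.2 ^ (2 * l + 2))
        = aC l * ∑ i : Fin n, ∑ j : Fin n, c i * c j * t i j ^ (2 * l + 2) := by
      rw [Fintype.sum_prod_type (f := fun p : Fin n × Fin n => c p.1 * c p.2 * (aC l * t p.1 p.2 ^ (2 * l + 2))), Finset.mul_sum]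
      refine Finset.sum_congr rfl fun i _ => ?_
      rw [Finset.mul_sum]
      exact Finset.sum_congr rfl fun j _ => by ring
    rw [e3]
    exact mul_nonneg (aC_pos l).le (power_sum_nonneg x c (2 * l + 2))
  exact add_nonneg (div_nonneg hQ1 (by norm_num)) (div_nonneg hQ2 (by positivity))
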